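/- Under Assumption (Lip), for every Q : 𝒳×𝒜 → ℝ and every μ, μ' ∈ Δ(𝒳), ‖P₂(Q,μ) − P₂(Q,μ')‖₁ ≤ (L_p + 2 − |𝒳|c_min)·‖μ − μ'‖₁. -/

import Mathlib

open Finset Filter
open scoped Classical

noncomputable section

variable {X A : Type*}

/-- A probability vector on a finite set. -/
def IsProb [Fintype X] (μ : X → ℝ) : Prop := (∀ x, 0 ≤ μ x) ∧ ∑ x, μ x = 1

/-- ℓ¹ norm of a signed measure / vector on a finite set. -/
def l1 [Fintype X] (μ : X → ℝ) : ℝ := ∑ x, |μ x|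

/-- Sup norm of a Q-table. -/
def supQ [Fintype X] [Fintype A] [Nonempty X] [Nonempty A] (Q : X → A → ℝ) : ℝ :=
  Finset.univ.sup' Finset.univ_nonempty (fun xa : X × A => |Q xa.1 xa.2|)

/-- Minimum of a row of a Q-table (minimum over actions). -/
def minRow [Fintype A] [Nonempty A] (q : A → ℝ) : ℝ :=
  Finset.univ.inf' Finset.univ_nonempty q

/-- The soft-min distribution over actions with parameter φ. -/
def softmin [Fintype A] (φ : ℝ) (z : A → ℝ) (a : A) : ℝ :=
  Real.exp (-φ * z a) / ∑ a', Real.exp (-φ * z a')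

/-- The argmin_e policy: uniform over the minimizers, zero elsewhere. -/
def argminE [Fintype A] [Nonempty A] (q : A → ℝ) (a : A) : ℝ :=
  if q a = minRow q then (1 : ℝ) / (Finset.univ.filter fun a' => q a' = minRow q).card else 0

/-- (P^{π,μ} ν)(x) = ∑_{x'} ν(x') ∑_a π(a|x') p(x|x',a,μ). -/
def Ppush [Fintype X] [Fintype A] (p : X → A → (X → ℝ) → X → ℝ)
    (π : X → A → ℝ) (μ ν : X → ℝ) (x : X) : ℝ :=
  ∑ x', ν x' * ∑ a, π x' a * p x' a μ x

/-- P₂(Q,μ) = P^{softmin_φ Q, μ} μ − μ. -/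
def P2 [Fintype X] [Fintype A] (φ : ℝ) (p : X → A → (X → ℝ) → X → ℝ)
    (Q : X → A → ℝ) (μ : X → ℝ) (x : X) : ℝ :=
  Ppush p (fun x' => softmin φ (Q x')) μ μ x - μ x

/-- The Bellman operator (B_μ Q)(x,a) = f(x,a,μ) + γ ∑_{x'} p(x'|x,a,μ) min_{a'} Q(x',a'). -/
def bell [Fintype X] [Fintype A] [Nonempty A]
    (f : X → A → (X → ℝ) → ℝ) (p : X → A → (X → ℝ) → X → ℝ) (γ : ℝ)
    (μ : X → ℝ) (Q : X → A → ℝ) (x : X) (a : A) : ℝ :=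
  f x a μ + γ * ∑ x', p x a μ x' * minRow (Q x')

/-- T₂(Q,μ) = B_μ Q − Q. -/
def T2 [Fintype X] [Fintype A] [Nonempty A]
    (f : X → A → (X → ℝ) → ℝ) (p : X → A → (X → ℝ) → X → ℝ) (γ : ℝ)
    (Q : X → A → ℝ) (μ : X → ℝ) (x : X) (a : A) : ℝ :=
  bell f p γ μ Q x a - Q x a

/-- the map μ ↦ P₂(Q,μ) is Lipschitz:
‖P₂(Q,μ) − P₂(Q,μ')‖₁ ≤ (L_p + 2 − |𝒳|c_min)‖μ − μ'‖₁. -/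
theorem P2_lipschitz_in_mu [Fintype X] [Fintype A] [Nonempty X] [Nonempty A]
    (φ : ℝ) (hφ : 0 < φ)
    (p : X → A → (X → ℝ) → X → ℝ)
    (hp0 : ∀ x a μ x', IsProb μ → 0 ≤ p x a μ x')
    (hp1 : ∀ x a μ, IsProb μ → ∑ x', p x a μ x' = 1)
    (cmin Lp : ℝ) (hcmin0 : 0 ≤ cmin)
    (hcmin : ∀ x a μ x', IsProb μ → cmin ≤ p x a μ x')
    (hLp0 : 0 ≤ Lp)
    (hLp : ∀ x a μ μ', IsProb μ → IsProb μ' →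
      ∑ x', |p x a μ x' - p x a μ' x'| ≤ Lp * l1 (fun y => μ y - μ' y))
    (Q : X → A → ℝ) (μ μ' : X → ℝ) (hμ : IsProb μ) (hμ' : IsProb μ') :
    l1 (fun x => P2 φ p Q μ x - P2 φ p Q μ' x)
      ≤ (Lp + 2 - (Fintype.card X : ℝ) * cmin) * l1 (fun x => μ x - μ' x) := by
  classical
  have hπ0 : ∀ (x' : X) (a : A), 0 ≤ softmin φ (Q x') a := by
    intro x' a
    unfold softmin
    positivity
  have hsumexp : ∀ x' : X, 0 < ∑ a' : A, Real.exp (-φ * Q x' a') :=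
    fun x' => Finset.sum_pos (fun a _ => Real.exp_pos _) Finset.univ_nonempty
  have hπ1 : ∀ x' : X, ∑ a : A, softmin φ (Q x') a = 1 := by
    intro x'
    unfold softmin
    rw [← Finset.sum_div]
    exact div_self (hsumexp x').ne'
  set π : X → A → ℝ := fun x' => softmin φ (Q x') with hπdef
  set ℓ : ℝ := l1 (fun x => μ x - μ' x) with hℓ
  have hℓ0 : 0 ≤ ℓ := Finset.sum_nonneg fun x _ => abs_nonneg _
  set S : X → X → ℝ := fun x' x => ∑ a, π x' a * p x' a μ x with hS
  set K : X → X → ℝ := fun x' x => ∑ a, π x' a * p x' a μ' x with hK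
  have hKc : ∀ x' x, cmin ≤ K x' x := by
    intro x' x
    calc cmin = ∑ a, π x' a * cmin := by rw [← Finset.sum_mul, hπ1, one_mul]
    _ ≤ ∑ a, π x' a * p x' a μ' x :=
      Finset.sum_le_sum fun a _ =>
        mul_le_mul_of_nonneg_left (hcmin _ _ _ _ hμ') (hπ0 _ _)
  have hK1 : ∀ x', ∑ x, K x' x = 1 := by
    intro x'
    calc ∑ x, ∑ a, π x' a * p x' a μ' x
        = ∑ a, ∑ x, π x' a * p x' a μ' x := Finset.sum_comm
      _ = ∑ a, π x' a * ∑ x, p x' a μ' x := by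
          refine Finset.sum_congr rfl fun a _ => ?_
          rw [Finset.mul_sum]
      _ = 1 := by
          simp only [hp1 _ _ _ hμ', mul_one]
          exact hπ1 x'
  -- the inner difference
  have hSsub : ∀ x' x, S x' x - K x' x = ∑ a, π x' a * (p x' a μ x - p x' a μ' x) := by
    intro x' x
    rw [← Finset.sum_sub_distrib]
    exact Finset.sum_congr rfl fun a _ => (mul_sub _ _ _).symm
  -- decomposition
  have hdecomp : ∀ x, P2 φ p Q μ x - P2 φ p Q μ' x =
      (∑ x', μ x' * (S x' x - K x' x)) +
        ((∑ x', (μ x' - μ' x') * K x' x) - (μ x - μ' x)) := by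
    intro x
    have key : (∑ x', μ x' * S x' x) - (∑ x', μ' x' * K x' x)
        = (∑ x', μ x' * (S x' x - K x' x)) + ∑ x', (μ x' - μ' x') * K x' x := by
      rw [← Finset.sum_sub_distrib, ← Finset.sum_add_distrib]
      exact Finset.sum_congr rfl fun x' _ => by ring
    have hP : P2 φ p Q μ x = (∑ x', μ x' * S x' x) - μ x := rfl
    have hP' : P2 φ p Q μ' x = (∑ x', μ' x' * K x' x) - μ' x := rfl
    rw [hP, hP']
    linarith [key]
  -- sum of μ − μ' is zero
  have hsum0 : ∑ x', (μ x' - μ' x') = 0 := by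
    rw [Finset.sum_sub_distrib, hμ.2, hμ'.2, sub_self]
  -- cancel cmin
  have hKsub : ∀ x, (∑ x', (μ x' - μ' x') * K x' x) =
      ∑ x', (μ x' - μ' x') * (K x' x - cmin) := by
    intro x
    rw [Finset.sum_congr rfl fun x' _ => (mul_sub (μ x' - μ' x') (K x' x) cmin)]
    rw [Finset.sum_sub_distrib, ← Finset.sum_mul, hsum0, zero_mul, sub_zero]
  -- term 1
  have h1 : ∑ x, |∑ x', μ x' * (S x' x - K x' x)| ≤ Lp * ℓ := by
    have hb : ∀ x, |∑ x', μ x' * (S x' x - K x' x)| ≤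
        ∑ x', μ x' * ∑ a, π x' a * |p x' a μ x - p x' a μ' x| := by
      intro x
      refine (Finset.abs_sum_le_sum_abs _ _).trans (Finset.sum_le_sum fun x' _ => ?_)
      rw [abs_mul, abs_of_nonneg (hμ.1 x')]
      refine mul_le_mul_of_nonneg_left ?_ (hμ.1 x')
      rw [hSsub]
      refine (Finset.abs_sum_le_sum_abs _ _).trans (Finset.sum_le_sum fun a _ => ?_)
      rw [abs_mul, abs_of_nonneg (hπ0 _ _)]
    calc ∑ x, |∑ x', μ x' * (S x' x - K x' x)|
        ≤ ∑ x, ∑ x', μ x' * ∑ a, π x' a * |p x' a μ x - p x' a μ' x| :=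
          Finset.sum_le_sum fun x _ => hb x
      _ = ∑ x', μ x' * ∑ a, π x' a * ∑ x, |p x' a μ x - p x' a μ' x| := by
          simp only [Finset.mul_sum]
          rw [Finset.sum_comm]
          exact Finset.sum_congr rfl fun x' _ => Finset.sum_comm
      _ ≤ ∑ x', μ x' * ∑ a, π x' a * (Lp * ℓ) := by
          refine Finset.sum_le_sum fun x' _ => mul_le_mul_of_nonneg_left
            (Finset.sum_le_sum fun a _ => mul_le_mul_of_nonneg_left ?_ (hπ0 _ _)) (hμ.1 x')
          exact hLp _ _ _ _ hμ hμ'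
      _ = Lp * ℓ := by
          have : ∀ x' : X, ∑ a, π x' a * (Lp * ℓ) = Lp * ℓ := by
            intro x'
            rw [← Finset.sum_mul, hπ1, one_mul]
          simp only [this]
          rw [← Finset.sum_mul, hμ.2, one_mul]
  -- term 2
  have h2 : ∑ x, |∑ x', (μ x' - μ' x') * K x' x| ≤ (1 - (Fintype.card X : ℝ) * cmin) * ℓ := by
    calc ∑ x, |∑ x', (μ x' - μ' x') * K x' x|
        = ∑ x, |∑ x', (μ x' - μ' x') * (K x' x - cmin)| := by
          refine Finset.sum_congr rfl fun x _ => ?_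
          rw [hKsub x]
      _ ≤ ∑ x, ∑ x', |μ x' - μ' x'| * (K x' x - cmin) := by
          refine Finset.sum_le_sum fun x _ => ?_
          refine (Finset.abs_sum_le_sum_abs _ _).trans (Finset.sum_le_sum fun x' _ => ?_)
          rw [abs_mul, abs_of_nonneg (sub_nonneg.2 (hKc x' x))]
      _ = ∑ x', |μ x' - μ' x'| * (1 - (Fintype.card X : ℝ) * cmin) := by
          rw [Finset.sum_comm]
          refine Finset.sum_congr rfl fun x' _ => ?_
          rw [← Finset.mul_sum, Finset.sum_sub_distrib, hK1,
            Finset.sum_const, Finset.card_univ, nsmul_eq_mul]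
      _ = (1 - (Fintype.card X : ℝ) * cmin) * ℓ := by
          rw [← Finset.sum_mul, mul_comm]
          rfl
  -- combine
  have hfinal : l1 (fun x => P2 φ p Q μ x - P2 φ p Q μ' x) ≤
      Lp * ℓ + ((1 - (Fintype.card X : ℝ) * cmin) * ℓ + ℓ) := by
    calc l1 (fun x => P2 φ p Q μ x - P2 φ p Q μ' x)
        = ∑ x, |(∑ x', μ x' * (S x' x - K x' x)) +
            ((∑ x', (μ x' - μ' x') * K x' x) - (μ x - μ' x))| := by
          refine Finset.sum_congr rfl fun x _ => ?_
          simp only [hdecomp x]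
      _ ≤ ∑ x, (|∑ x', μ x' * (S x' x - K x' x)| +
            (|∑ x', (μ x' - μ' x') * K x' x| + |μ x - μ' x|)) := by
          refine Finset.sum_le_sum fun x _ => ?_
          refine (abs_add_le _ _).trans (add_le_add_right ?_ _)
          exact (abs_sub _ _)
      _ = (∑ x, |∑ x', μ x' * (S x' x - K x' x)|) +
            ((∑ x, |∑ x', (μ x' - μ' x') * K x' x|) + ∑ x, |μ x - μ' x|) := by
          rw [Finset.sum_add_distrib, Finset.sum_add_distrib]
      _ ≤ Lp * ℓ + ((1 - (Fintype.card X : ℝ) * cmin) * ℓ + ℓ) := by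
          refine add_le_add h1 (add_le_add h2 ?_)
          exact le_of_eq rfl
  calc l1 (fun x => P2 φ p Q μ x - P2 φ p Q μ' x)
      ≤ Lp * ℓ + ((1 - (Fintype.card X : ℝ) * cmin) * ℓ + ℓ) := hfinal
    _ = (Lp + 2 - (Fintype.card X : ℝ) * cmin) * ℓ := by ring
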